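/- arXiv:1807.11035 — 2 statements merged into one kernel-verified Lean document; each statement's English description precedes it below -/
import Mathlib

section
/- Let F₀, F₁ : U → ℝ^k be feature maps on the grid U = ZMod Q × ZMod M such that F̂₁(ω)*F̂₀(ω) ≠ 0 for every ω ∈ U, and let G : U → ℂ^k be the channelwise inverse discrete Fourier transform of Ĝ(ω) = F̂₁(ω) · (F̂₁(ω)*F̂₀(ω)) / |F̂₁(ω)*F̂₀(ω)|. Then G is real-valued: Im(G(p,n)) = 0 for every p ∈ U and every channel 1 ≤ n ≤ k. -/
open Finset Complex

/-- The discrete Fourier transform of `g : ZMod Q × ZMod M → ℂ`. -/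
noncomputable def dft (Q M : ℕ) [NeZero Q] [NeZero M]
    (g : ZMod Q × ZMod M → ℂ) (ω : ZMod Q × ZMod M) : ℂ :=
  ∑ p : ZMod Q × ZMod M, g p *
    Complex.exp (-(2 * Real.pi * Complex.I) *
      (((ω.1.val * p.1.val : ℕ) : ℂ) / (Q : ℂ) + ((ω.2.val * p.2.val : ℕ) : ℂ) / (M : ℂ)))

/-- The channelwise DFT of a real feature map `F : U → ℝ^k`. -/
noncomputable def cdft (Q M : ℕ) [NeZero Q] [NeZero M] {k : ℕ}
    (F : ZMod Q × ZMod M → Fin k → ℝ) (ω : ZMod Q × ZMod M) (n : Fin k) : ℂ :=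
  dft Q M (fun p => ((F p n : ℝ) : ℂ)) ω

/-- The inverse discrete Fourier transform of `h : ZMod Q × ZMod M → ℂ`. -/
noncomputable def idft (Q M : ℕ) [NeZero Q] [NeZero M]
    (h : ZMod Q × ZMod M → ℂ) (p : ZMod Q × ZMod M) : ℂ :=
  (∑ ω : ZMod Q × ZMod M, h ω *
    Complex.exp ((2 * Real.pi * Complex.I) *
      (((ω.1.val * p.1.val : ℕ) : ℂ) / (Q : ℂ) + ((ω.2.val * p.2.val : ℕ) : ℂ) / (M : ℂ)))) /
    ((Q * M : ℕ) : ℂ)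

/-- Hermitian inner product `a*b = Σ_n conj(a_n)·b_n` on `ℂ^k`. -/
noncomputable def cinner {k : ℕ} (a b : Fin k → ℂ) : ℂ :=
  ∑ n : Fin k, (starRingEnd ℂ) (a n) * b n

/-- The optimal-transport mixed spectrum
`Ĝ(ω) = F̂₁(ω)·(F̂₁(ω)*F̂₀(ω))/|F̂₁(ω)*F̂₀(ω)|`. -/
noncomputable def Ghat (Q M : ℕ) [NeZero Q] [NeZero M] {k : ℕ}
    (F₀ F₁ : ZMod Q × ZMod M → Fin k → ℝ) (ω : ZMod Q × ZMod M) (n : Fin k) : ℂ :=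
  cdft Q M F₁ ω n * cinner (cdft Q M F₁ ω) (cdft Q M F₀ ω) /
    ((‖cinner (cdft Q M F₁ ω) (cdft Q M F₀ ω)‖ : ℝ) : ℂ)

lemma key_exp (d : ℕ) [NeZero d] (a : ZMod d) (c : ℕ) :
    Complex.exp ((2 * Real.pi * Complex.I) * ((((-a).val * c : ℕ) : ℂ) / d)) =
      Complex.exp (-(2 * Real.pi * Complex.I) * (((a.val * c : ℕ) : ℂ) / d)) := by
  obtain ⟨t, ht⟩ : ∃ t : ℕ, (-a).val * c + a.val * c = d * t := by
    rcases eq_or_ne a 0 with h | h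
    · exact ⟨0, by simp [h]⟩
    · refine ⟨c, ?_⟩
      have h1 : (-a).val = d - a.val := by rw [ZMod.neg_val]; simp [h]
      have h2 : a.val ≤ d := le_of_lt (ZMod.val_lt a)
      rw [h1, ← add_mul, Nat.sub_add_cancel h2]
  have hdne : (d : ℂ) ≠ 0 := Nat.cast_ne_zero.mpr (NeZero.ne d)
  rw [← div_eq_one_iff_eq (Complex.exp_ne_zero _), ← Complex.exp_sub]
  have hc : ((((-a).val * c : ℕ) : ℂ)) + (((a.val * c : ℕ) : ℂ)) = (d : ℂ) * t := by
    exact_mod_cast congrArg (Nat.cast : ℕ → ℂ) ht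
  have h3 : (2 * Real.pi * Complex.I) * ((((-a).val * c : ℕ) : ℂ) / d) -
      -(2 * Real.pi * Complex.I) * (((a.val * c : ℕ) : ℂ) / d) =
      (t : ℂ) * (2 * Real.pi * Complex.I) := by
    have : (2 * Real.pi * Complex.I) * ((((-a).val * c : ℕ) : ℂ) / d) -
        -(2 * Real.pi * Complex.I) * (((a.val * c : ℕ) : ℂ) / d) =
        (2 * Real.pi * Complex.I) * ((((((-a).val * c : ℕ) : ℂ)) + (((a.val * c : ℕ) : ℂ))) / d) := by
      ring
    rw [this, hc, mul_div_cancel_left₀ _ hdne]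
    ring
  rw [h3, Complex.exp_nat_mul_two_pi_mul_I]

lemma conj_two_pi_I : (starRingEnd ℂ) (2 * (Real.pi : ℂ) * Complex.I) =
    -(2 * (Real.pi : ℂ) * Complex.I) := by
  simp [map_mul, Complex.conj_I, map_ofNat]

lemma conj_exp_pos' (x : ℂ) (hx : (starRingEnd ℂ) x = x) :
    (starRingEnd ℂ) (Complex.exp ((2 * Real.pi * Complex.I) * x)) =
      Complex.exp (-(2 * Real.pi * Complex.I) * x) := by
  rw [← Complex.exp_conj, map_mul, hx, conj_two_pi_I]

lemma conj_exp_neg' (x : ℂ) (hx : (starRingEnd ℂ) x = x) :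
    (starRingEnd ℂ) (Complex.exp (-(2 * Real.pi * Complex.I) * x)) =
      Complex.exp ((2 * Real.pi * Complex.I) * x) := by
  have := congrArg (starRingEnd ℂ) (conj_exp_pos' x hx)
  rw [Complex.conj_conj] at this
  exact this.symm

lemma arg_real (Q M : ℕ) (m l : ℕ) :
    (starRingEnd ℂ) (((m : ℕ) : ℂ) / Q + ((l : ℕ) : ℂ) / M) =
      ((m : ℕ) : ℂ) / Q + ((l : ℕ) : ℂ) / M := by
  simp only [map_add, map_div₀, map_natCast]

lemma exp_pos_neg (Q M : ℕ) [NeZero Q] [NeZero M] (ω p : ZMod Q × ZMod M) :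
    Complex.exp ((2 * Real.pi * Complex.I) *
      ((((-ω).1.val * p.1.val : ℕ) : ℂ) / Q + (((-ω).2.val * p.2.val : ℕ) : ℂ) / M)) =
    Complex.exp (-(2 * Real.pi * Complex.I) *
      (((ω.1.val * p.1.val : ℕ) : ℂ) / Q + ((ω.2.val * p.2.val : ℕ) : ℂ) / M)) := by
  rw [mul_add, Complex.exp_add, mul_add, Complex.exp_add,
    show (-ω).1 = -ω.1 from rfl, show (-ω).2 = -ω.2 from rfl,
    key_exp Q ω.1 p.1.val, key_exp M ω.2 p.2.val]

lemma conj_cdft (Q M : ℕ) [NeZero Q] [NeZero M] {k : ℕ}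
    (F : ZMod Q × ZMod M → Fin k → ℝ) (ω : ZMod Q × ZMod M) (n : Fin k) :
    (starRingEnd ℂ) (cdft Q M F ω n) = cdft Q M F (-ω) n := by
  unfold cdft dft
  rw [map_sum]
  refine Finset.sum_congr rfl fun p _ => ?_
  rw [map_mul, Complex.conj_ofReal]
  congr 1
  rw [conj_exp_neg' _ (arg_real Q M _ _)]
  have := exp_pos_neg Q M (-ω) p
  simp only [neg_neg] at this
  exact this

lemma cinner_neg (Q M : ℕ) [NeZero Q] [NeZero M] {k : ℕ}
    (F₀ F₁ : ZMod Q × ZMod M → Fin k → ℝ) (ω : ZMod Q × ZMod M) :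
    cinner (cdft Q M F₁ (-ω)) (cdft Q M F₀ (-ω)) =
      (starRingEnd ℂ) (cinner (cdft Q M F₁ ω) (cdft Q M F₀ ω)) := by
  unfold cinner
  rw [map_sum]
  refine Finset.sum_congr rfl fun n _ => ?_
  simp only [← conj_cdft, map_mul, Complex.conj_conj]

lemma conj_Ghat (Q M : ℕ) [NeZero Q] [NeZero M] {k : ℕ}
    (F₀ F₁ : ZMod Q × ZMod M → Fin k → ℝ) (ω : ZMod Q × ZMod M) (n : Fin k) :
    (starRingEnd ℂ) (Ghat Q M F₀ F₁ ω n) = Ghat Q M F₀ F₁ (-ω) n := by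
  unfold Ghat
  rw [map_div₀, map_mul, Complex.conj_ofReal, conj_cdft, cinner_neg Q M F₀ F₁ ω]
  congr 2
  exact (Complex.norm_conj _).symm

/-- The channelwise inverse DFT of the mixed spectrum `Ĝ` is real-valued. -/
theorem idft_Ghat_real (Q M : ℕ) [NeZero Q] [NeZero M] {k : ℕ}
    (F₀ F₁ : ZMod Q × ZMod M → Fin k → ℝ)
    (h : ∀ ω : ZMod Q × ZMod M, cinner (cdft Q M F₁ ω) (cdft Q M F₀ ω) ≠ 0)
    (p : ZMod Q × ZMod M) (n : Fin k) :
    (idft Q M (fun ω => Ghat Q M F₀ F₁ ω n) p).im = 0 := by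
  rw [← Complex.conj_eq_iff_im]
  unfold idft
  rw [map_div₀, map_natCast, map_sum]
  congr 1
  refine Fintype.sum_equiv (Equiv.neg (ZMod Q × ZMod M)) _ _ fun ω => ?_
  rw [map_mul, conj_Ghat, conj_exp_pos' _ (arg_real Q M _ _), ← exp_pos_neg Q M ω p]
  rfl
end

section
/- Let F₀, F₁ : U → ℝ^k be feature maps on the grid U = ZMod Q × ZMod M such that F̂₁(ω)*F̂₀(ω) ≠ 0 for every ω ∈ U. For ρ ∈ [0,1] let F_ρ be the channelwise inverse discrete Fourier transform of F̂_ρ = (1−ρ)·F̂₀ + ρ·Ĝ, where Ĝ(ω) = F̂₁(ω) · (F̂₁(ω)*F̂₀(ω)) / |F̂₁(ω)*F̂₀(ω)|, and define G_ρ(i,j) = (1/|U|) Σ_{p∈U} F_ρ(p,i)·F_ρ(p,j) and S_ρ(p,n) = (1/|U|) Σ_{p'∈U} F_ρ(p',n)·F_ρ(p+p',n). Then: (a) each entry G_ρ(i,j) and each value S_ρ(p,n) is a polynomial function of ρ of degree at most 2, hence ρ ↦ G_ρ and ρ ↦ S_ρ are continuous on [0,1]; (b) at the endpoints, G_0 and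 S_0 are the Gram matrix and correlation of F₀, and G_1 and S_1 are the Gram matrix and correlation of F₁. (Proposition 2: the interpolated Gram matrix and correlation matrix connect those of the two inputs continuously.) -/
open Finset Complex

/-- The interpolated feature map `F_ρ`, i.e. the channelwise inverse DFT of
`F̂_ρ = (1−ρ)·F̂₀ + ρ·Ĝ`. -/
noncomputable def Fmix (Q M : ℕ) [NeZero Q] [NeZero M] {k : ℕ}
    (F₀ F₁ : ZMod Q × ZMod M → Fin k → ℝ) (ρ : ℝ)
    (p : ZMod Q × ZMod M) (n : Fin k) : ℂ :=
  idft Q M (fun ω =>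
    ((1 - ρ : ℝ) : ℂ) * cdft Q M F₀ ω n + ((ρ : ℝ) : ℂ) * Ghat Q M F₀ F₁ ω n) p

/-- The Gram matrix of the interpolated feature map `F_ρ`. -/
noncomputable def Gmix (Q M : ℕ) [NeZero Q] [NeZero M] {k : ℕ}
    (F₀ F₁ : ZMod Q × ZMod M → Fin k → ℝ) (ρ : ℝ) (i j : Fin k) : ℂ :=
  (∑ p : ZMod Q × ZMod M, Fmix Q M F₀ F₁ ρ p i * Fmix Q M F₀ F₁ ρ p j) /
    ((Q * M : ℕ) : ℂ)

/-- The correlation of the interpolated feature map `F_ρ` at offset `p`. -/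
noncomputable def Smix (Q M : ℕ) [NeZero Q] [NeZero M] {k : ℕ}
    (F₀ F₁ : ZMod Q × ZMod M → Fin k → ℝ) (ρ : ℝ)
    (p : ZMod Q × ZMod M) (n : Fin k) : ℂ :=
  (∑ p' : ZMod Q × ZMod M, Fmix Q M F₀ F₁ ρ p' n * Fmix Q M F₀ F₁ ρ (p + p') n) /
    ((Q * M : ℕ) : ℂ)


noncomputable def ee (N : ℕ) [NeZero N] (a b : ZMod N) : ℂ :=
  Complex.exp ((2 * Real.pi * Complex.I) * (((a.val * b.val : ℕ) : ℂ) / (N : ℂ)))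

lemma ee_ne_zero (N : ℕ) [NeZero N] (a b : ZMod N) : ee N a b ≠ 0 := Complex.exp_ne_zero _

lemma ee_comm (N : ℕ) [NeZero N] (a b : ZMod N) : ee N a b = ee N b a := by
  simp [ee, Nat.mul_comm]

lemma ee_zero (N : ℕ) [NeZero N] (b : ZMod N) : ee N 0 b = 1 := by
  simp [ee]

lemma ee_add_right (N : ℕ) [NeZero N] (a b c : ZMod N) :
    ee N a (b + c) = ee N a b * ee N a c := by
  have hN : (N : ℂ) ≠ 0 := Nat.cast_ne_zero.mpr (NeZero.ne N)
  rw [ee, ee, ee, ← Complex.exp_add]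
  have hval : (a.val * (b + c).val + a.val * ((b.val + c.val) / N) * N : ℕ)
      = a.val * b.val + a.val * c.val := by
    rw [ZMod.val_add]
    have := Nat.mod_add_div (b.val + c.val) N
    nlinarith [this]
  have hC : ((a.val * (b + c).val : ℕ) : ℂ) + ((a.val * ((b.val + c.val) / N) : ℕ) : ℂ) * (N : ℂ)
      = ((a.val * b.val : ℕ) : ℂ) + ((a.val * c.val : ℕ) : ℂ) := by
    exact_mod_cast congrArg (fun n : ℕ => (n : ℂ)) hval
  have key : (2 * (Real.pi:ℂ) * Complex.I) * (((a.val * (b + c).val : ℕ) : ℂ) / (N : ℂ))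
      = (2 * (Real.pi:ℂ) * Complex.I) * (((a.val * b.val : ℕ) : ℂ) / (N : ℂ))
        + (2 * (Real.pi:ℂ) * Complex.I) * (((a.val * c.val : ℕ) : ℂ) / (N : ℂ))
        + ((-(a.val * ((b.val + c.val) / N) : ℕ) : ℤ) : ℂ) * (2 * (Real.pi:ℂ) * Complex.I) := by
    rw [Int.cast_neg, Int.cast_natCast]
    linear_combination ((2 * (Real.pi:ℂ) * Complex.I) * ((N:ℂ))⁻¹) * hC
      + (-(2 * (Real.pi:ℂ) * Complex.I) * ((a.val * ((b.val + c.val) / N) : ℕ) : ℂ)) * (mul_inv_cancel₀ hN)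
  rw [key, Complex.exp_add, Complex.exp_int_mul_two_pi_mul_I, mul_one]

lemma ee_neg_right (N : ℕ) [NeZero N] (a b : ZMod N) : ee N a (-b) = (ee N a b)⁻¹ := by
  have h : ee N a (-b) * ee N a b = 1 := by
    rw [← ee_add_right, neg_add_cancel, ee_comm, ee_zero]
  exact eq_inv_of_mul_eq_one_left h

lemma conj_ee (N : ℕ) [NeZero N] (a b : ZMod N) :
    (starRingEnd ℂ) (ee N a b) = (ee N a b)⁻¹ := by
  rw [ee, ← Complex.exp_conj, ← Complex.exp_neg]
  congr 1
  simp only [map_mul, map_div₀, map_ofNat, Complex.conj_I, Complex.conj_natCast,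
    Complex.conj_ofReal]
  ring

lemma sum_ee (N : ℕ) [NeZero N] (a : ZMod N) :
    ∑ b : ZMod N, ee N a b = if a = 0 then (N : ℂ) else 0 := by
  by_cases ha : a = 0
  · subst ha
    simp [ee_zero, Finset.card_univ, ZMod.card]
  · rw [if_neg ha]
    set z : ℂ := Complex.exp ((2 * Real.pi * Complex.I) * ((a.val : ℂ) / (N : ℂ))) with hz
    have hee : ∀ b : ZMod N, ee N a b = z ^ b.val := by
      intro b
      rw [hz, ← Complex.exp_nat_mul, ee]
      congr 1
      push_cast
      ring
    have hsum : ∑ b : ZMod N, ee N a b = ∑ i ∈ Finset.range N, z ^ i := by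
      simp only [hee]
      exact Finset.sum_nbij' (fun b => b.val) (fun i => (i : ZMod N))
        (fun b _ => Finset.mem_range.mpr (ZMod.val_lt b))
        (fun i _ => Finset.mem_univ _)
        (fun b _ => ZMod.natCast_rightInverse b)
        (fun i hi => ZMod.val_cast_of_lt (Finset.mem_range.mp hi))
        (fun b _ => rfl)
    have hzN : z ^ N = 1 := by
      rw [hz, ← Complex.exp_nat_mul]
      have : (N : ℂ) * ((2 * Real.pi * Complex.I) * ((a.val : ℂ) / (N : ℂ)))
          = ((a.val : ℤ) : ℂ) * (2 * Real.pi * Complex.I) := by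
        have hN : (N : ℂ) ≠ 0 := Nat.cast_ne_zero.mpr (NeZero.ne N)
        have hc : (a.val : ℂ) / (N : ℂ) * (N : ℂ) = (a.val : ℂ) := div_mul_cancel₀ _ hN
        push_cast
        linear_combination (2 * (Real.pi : ℂ) * Complex.I) * hc
      rw [this, Complex.exp_int_mul_two_pi_mul_I]
    have hz1 : z ≠ 1 := by
      intro hone
      rw [hz, Complex.exp_eq_one_iff] at hone
      obtain ⟨n, hn⟩ := hone
      have h2 : (2 * (Real.pi : ℂ) * Complex.I) ≠ 0 := by
        refine mul_ne_zero (mul_ne_zero two_ne_zero ?_) Complex.I_ne_zero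
        exact_mod_cast Real.pi_ne_zero
      have hdiv : (a.val : ℂ) / (N : ℂ) = (n : ℂ) := by
        apply mul_left_cancel₀ h2
        rw [hn]; ring
      have hN : (N : ℂ) ≠ 0 := Nat.cast_ne_zero.mpr (NeZero.ne N)
      have hval : (a.val : ℂ) = (n : ℂ) * (N : ℂ) := (div_eq_iff hN).mp hdiv
      have hvalZ : (a.val : ℤ) = n * (N : ℤ) := by exact_mod_cast hval
      have hpos : 0 < a.val := Nat.pos_of_ne_zero (fun h0 => ha ((ZMod.val_eq_zero a).mp h0))
      have hlt : a.val < N := ZMod.val_lt a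
      have hNpos : (0:ℤ) < (N:ℤ) := by exact_mod_cast Nat.pos_of_ne_zero (NeZero.ne N)
      have h1 : (0:ℤ) < (a.val:ℤ) := by exact_mod_cast hpos
      have h2' : (a.val:ℤ) < (N:ℤ) := by exact_mod_cast hlt
      rcases le_or_gt n 0 with hn0 | hn0
      · nlinarith
      · have hn1 : 1 ≤ n := hn0
        nlinarith
    rw [hsum, geom_sum_eq hz1, hzN]
    simp

section ch
variable (Q M : ℕ) [NeZero Q] [NeZero M]

noncomputable def ch (ω p : ZMod Q × ZMod M) : ℂ := ee Q ω.1 p.1 * ee M ω.2 p.2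

lemma ch_ne_zero (ω p : ZMod Q × ZMod M) : ch Q M ω p ≠ 0 :=
  mul_ne_zero (ee_ne_zero _ _ _) (ee_ne_zero _ _ _)

lemma ch_comm (ω p : ZMod Q × ZMod M) : ch Q M ω p = ch Q M p ω := by
  rw [ch, ch, ee_comm, ee_comm M]

lemma ch_zero_right (ω : ZMod Q × ZMod M) : ch Q M ω 0 = 1 := by
  rw [ch]
  have h1 : ee Q ω.1 (0 : ZMod Q × ZMod M).1 = 1 := by rw [ee_comm]; exact ee_zero Q ω.1
  have h2 : ee M ω.2 (0 : ZMod Q × ZMod M).2 = 1 := by rw [ee_comm]; exact ee_zero M ω.2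
  rw [h1, h2, mul_one]

lemma ch_add_right (ω p q : ZMod Q × ZMod M) :
    ch Q M ω (p + q) = ch Q M ω p * ch Q M ω q := by
  rw [ch, ch, ch]
  show ee Q ω.1 (p.1 + q.1) * ee M ω.2 (p.2 + q.2) = _
  rw [ee_add_right, ee_add_right]; ring

lemma ch_add_left (ω τ p : ZMod Q × ZMod M) :
    ch Q M (ω + τ) p = ch Q M ω p * ch Q M τ p := by
  rw [ch_comm, ch_add_right, ch_comm Q M p ω, ch_comm Q M p τ]

lemma ch_neg_right (ω p : ZMod Q × ZMod M) : ch Q M ω (-p) = (ch Q M ω p)⁻¹ := by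
  have h : ch Q M ω (-p) * ch Q M ω p = 1 := by
    rw [← ch_add_right, neg_add_cancel, ch_zero_right]
  exact eq_inv_of_mul_eq_one_left h

lemma ch_neg_left (ω p : ZMod Q × ZMod M) : ch Q M (-ω) p = (ch Q M ω p)⁻¹ := by
  rw [ch_comm, ch_neg_right, ch_comm]

lemma conj_ch (ω p : ZMod Q × ZMod M) :
    (starRingEnd ℂ) (ch Q M ω p) = (ch Q M ω p)⁻¹ := by
  rw [ch, map_mul, conj_ee, conj_ee, mul_inv]

lemma sum_ch (ω : ZMod Q × ZMod M) :
    ∑ p : ZMod Q × ZMod M, ch Q M ω p = if ω = 0 then ((Q * M : ℕ) : ℂ) else 0 := by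
  rw [Fintype.sum_prod_type]
  have : ∀ x : ZMod Q, ∑ y : ZMod M, ch Q M ω (x, y) = ee Q ω.1 x * ∑ y : ZMod M, ee M ω.2 y := by
    intro x; rw [Finset.mul_sum]; rfl
  simp_rw [this, ← Finset.sum_mul, sum_ee]
  by_cases h1 : ω.1 = 0
  · by_cases h2 : ω.2 = 0
    · rw [if_pos h1, if_pos h2, if_pos (Prod.ext h1 h2)]; push_cast; ring
    · rw [if_pos h1, if_neg h2, if_neg (fun h => h2 (congrArg Prod.snd h))]; ring
  · rw [if_neg h1, if_neg (fun h => h1 (congrArg Prod.fst h))]; ring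

lemma dft_eq_ch (g : ZMod Q × ZMod M → ℂ) (ω : ZMod Q × ZMod M) :
    dft Q M g ω = ∑ p : ZMod Q × ZMod M, g p * (ch Q M ω p)⁻¹ := by
  rw [dft]
  refine Finset.sum_congr rfl fun p _ => ?_
  rw [ch, ee, ee, ← Complex.exp_add, ← Complex.exp_neg]
  congr 2
  ring

lemma idft_eq_ch (h : ZMod Q × ZMod M → ℂ) (p : ZMod Q × ZMod M) :
    idft Q M h p = (∑ ω : ZMod Q × ZMod M, h ω * ch Q M ω p) / ((Q * M : ℕ) : ℂ) := by
  rw [idft]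
  congr 1
  refine Finset.sum_congr rfl fun ω _ => ?_
  rw [ch, ee, ee, ← Complex.exp_add, mul_add]
end ch



section main
variable (Q M : ℕ) [NeZero Q] [NeZero M]

lemma QM_ne_zero : ((Q * M : ℕ) : ℂ) ≠ 0 :=
  Nat.cast_ne_zero.mpr (Nat.mul_ne_zero (NeZero.ne Q) (NeZero.ne M))

lemma idft_dft (g : ZMod Q × ZMod M → ℂ) (p : ZMod Q × ZMod M) :
    idft Q M (dft Q M g) p = g p := by
  have hN := QM_ne_zero Q M
  rw [idft_eq_ch]
  have step : ∀ ω : ZMod Q × ZMod M, dft Q M g ω * ch Q M ω p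
      = ∑ p' : ZMod Q × ZMod M, g p' * ch Q M ω (p + -p') := by
    intro ω
    rw [dft_eq_ch, Finset.sum_mul]
    refine Finset.sum_congr rfl fun p' _ => ?_
    rw [ch_add_right, ch_neg_right]
    ring
  simp_rw [step]
  rw [Finset.sum_comm]
  have inner : ∀ p' : ZMod Q × ZMod M,
      ∑ ω : ZMod Q × ZMod M, g p' * ch Q M ω (p + -p')
        = g p' * (if p' = p then ((Q * M : ℕ) : ℂ) else 0) := by
    intro p'
    rw [← Finset.mul_sum]
    congr 1
    have hsw : ∑ ω : ZMod Q × ZMod M, ch Q M ω (p + -p')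
        = ∑ ω : ZMod Q × ZMod M, ch Q M (p + -p') ω :=
      Finset.sum_congr rfl fun ω _ => ch_comm Q M ω _
    rw [hsw, sum_ch]
    have hiff : (p + -p' = 0) = (p' = p) := by
      rw [add_neg_eq_zero]; exact propext ⟨fun hh => hh.symm, fun hh => hh.symm⟩
    exact if_congr (iff_of_eq hiff) rfl rfl
  simp_rw [inner, mul_ite, mul_zero, Finset.sum_ite_eq' Finset.univ p]
  simp only [Finset.mem_univ, if_true]
  rw [mul_div_assoc, div_self hN, mul_one]

lemma corr_idft (h h' : ZMod Q × ZMod M → ℂ) (p : ZMod Q × ZMod M) :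
    ∑ p' : ZMod Q × ZMod M, idft Q M h p' * idft Q M h' (p + p')
      = (∑ ω : ZMod Q × ZMod M, h (-ω) * h' ω * ch Q M ω p) / ((Q * M : ℕ) : ℂ) := by
  have hN := QM_ne_zero Q M
  set N : ℂ := ((Q * M : ℕ) : ℂ) with hNdef
  have e1 : ∀ p' : ZMod Q × ZMod M, idft Q M h p' * idft Q M h' (p + p')
      = (∑ ω : ZMod Q × ZMod M, ∑ τ : ZMod Q × ZMod M,
          h ω * h' τ * ch Q M τ p * ch Q M (ω + τ) p') / (N * N) := by
    intro p'
    rw [idft_eq_ch, idft_eq_ch, div_mul_div_comm, Finset.sum_mul_sum]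
    congr 1
    refine Finset.sum_congr rfl fun ω _ => Finset.sum_congr rfl fun τ _ => ?_
    rw [ch_add_right, ch_add_left]
    ring
  simp_rw [e1, ← Finset.sum_div]
  have e2 : ∑ p' : ZMod Q × ZMod M, ∑ ω : ZMod Q × ZMod M, ∑ τ : ZMod Q × ZMod M,
        h ω * h' τ * ch Q M τ p * ch Q M (ω + τ) p'
      = ∑ ω : ZMod Q × ZMod M, ∑ τ : ZMod Q × ZMod M,
        h ω * h' τ * ch Q M τ p * ∑ p' : ZMod Q × ZMod M, ch Q M (ω + τ) p' := by
    rw [Finset.sum_comm]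
    refine Finset.sum_congr rfl fun ω _ => ?_
    rw [Finset.sum_comm]
    refine Finset.sum_congr rfl fun τ _ => ?_
    rw [Finset.mul_sum]
  rw [e2]
  have e3 : ∀ ω : ZMod Q × ZMod M,
      ∑ τ : ZMod Q × ZMod M, h ω * h' τ * ch Q M τ p * ∑ p' : ZMod Q × ZMod M, ch Q M (ω + τ) p'
        = h ω * h' (-ω) * ch Q M (-ω) p * N := by
    intro ω
    simp_rw [sum_ch]
    rw [Finset.sum_eq_single (-ω)]
    · rw [if_pos (add_neg_cancel ω)]
    · intro τ _ hτ
      rw [if_neg, mul_zero]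
      intro hc
      exact hτ (by rw [← neg_eq_of_add_eq_zero_right hc])
    · intro hmem; exact absurd (Finset.mem_univ _) hmem
  simp_rw [e3]
  rw [← Finset.sum_mul, mul_div_assoc]
  have e4 : N / (N * N) = 1 / N := by
    rw [div_eq_div_iff (mul_ne_zero hN hN) hN]; ring
  rw [e4]
  have e5 : ∑ ω : ZMod Q × ZMod M, h ω * h' (-ω) * ch Q M (-ω) p
      = ∑ ω : ZMod Q × ZMod M, h (-ω) * h' ω * ch Q M ω p := by
    refine Finset.sum_nbij' (fun ω => -ω) (fun ω => -ω)
      (fun ω _ => Finset.mem_univ _) (fun ω _ => Finset.mem_univ _)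
      (fun ω _ => neg_neg ω) (fun ω _ => neg_neg ω) (fun ω _ => ?_)
    rw [neg_neg]
  rw [e5]
  ring

lemma cdft_neg {k : ℕ} (F : ZMod Q × ZMod M → Fin k → ℝ) (ω : ZMod Q × ZMod M) (n : Fin k) :
    cdft Q M F (-ω) n = (starRingEnd ℂ) (cdft Q M F ω n) := by
  rw [cdft, cdft, dft_eq_ch, dft_eq_ch, map_sum]
  refine Finset.sum_congr rfl fun p _ => ?_
  rw [map_mul, Complex.conj_ofReal, map_inv₀, conj_ch, inv_inv, ch_neg_left, inv_inv]

lemma idft_cdft {k : ℕ} (F : ZMod Q × ZMod M → Fin k → ℝ) (p : ZMod Q × ZMod M) (n : Fin k) :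
    idft Q M (fun ω => cdft Q M F ω n) p = ((F p n : ℝ) : ℂ) :=
  idft_dft Q M (fun q => ((F q n : ℝ) : ℂ)) p

end main


/-- Proposition 2: the interpolated Gram matrix `G_ρ` and correlation `S_ρ` are
quadratic polynomials in `ρ` (hence continuous on `[0,1]`), and at the endpoints
they coincide with the Gram matrices and correlations of the inputs `F₀`, `F₁`. -/
theorem Gmix_Smix_quadratic_continuous_and_endpoints
    (Q M : ℕ) [NeZero Q] [NeZero M] {k : ℕ}
    (F₀ F₁ : ZMod Q × ZMod M → Fin k → ℝ)
    (h : ∀ ω : ZMod Q × ZMod M, cinner (cdft Q M F₁ ω) (cdft Q M F₀ ω) ≠ 0) :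
    (∀ i j : Fin k, ∃ a b c : ℂ, ∀ ρ : ℝ,
      Gmix Q M F₀ F₁ ρ i j = a + b * (ρ : ℂ) + c * (ρ : ℂ) ^ 2) ∧
    (∀ i j : Fin k,
      ContinuousOn (fun ρ : ℝ => Gmix Q M F₀ F₁ ρ i j) (Set.Icc 0 1)) ∧
    (∀ (p : ZMod Q × ZMod M) (n : Fin k), ∃ a b c : ℂ, ∀ ρ : ℝ,
      Smix Q M F₀ F₁ ρ p n = a + b * (ρ : ℂ) + c * (ρ : ℂ) ^ 2) ∧
    (∀ (p : ZMod Q × ZMod M) (n : Fin k),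
      ContinuousOn (fun ρ : ℝ => Smix Q M F₀ F₁ ρ p n) (Set.Icc 0 1)) ∧
    (∀ i j : Fin k,
      Gmix Q M F₀ F₁ 0 i j =
        (((∑ p : ZMod Q × ZMod M, F₀ p i * F₀ p j) / ((Q * M : ℕ) : ℝ) : ℝ) : ℂ) ∧
      Gmix Q M F₀ F₁ 1 i j =
        (((∑ p : ZMod Q × ZMod M, F₁ p i * F₁ p j) / ((Q * M : ℕ) : ℝ) : ℝ) : ℂ)) ∧
    (∀ (p : ZMod Q × ZMod M) (n : Fin k),
      Smix Q M F₀ F₁ 0 p n =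
        (((∑ p' : ZMod Q × ZMod M, F₀ p' n * F₀ (p + p') n) / ((Q * M : ℕ) : ℝ) : ℝ) : ℂ) ∧
      Smix Q M F₀ F₁ 1 p n =
        (((∑ p' : ZMod Q × ZMod M, F₁ p' n * F₁ (p + p') n) / ((Q * M : ℕ) : ℝ) : ℝ) : ℂ)) := by
  classical
  have hN := QM_ne_zero Q M
  -- affine decomposition of `Fmix`
  set A : (ZMod Q × ZMod M) → Fin k → ℂ :=
    fun p n => idft Q M (fun ω => cdft Q M F₀ ω n) p with hA
  set B : (ZMod Q × ZMod M) → Fin k → ℂ :=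
    fun p n => idft Q M (fun ω => Ghat Q M F₀ F₁ ω n) p -
      idft Q M (fun ω => cdft Q M F₀ ω n) p with hB
  have hFmix : ∀ (ρ : ℝ) (p : ZMod Q × ZMod M) (n : Fin k),
      Fmix Q M F₀ F₁ ρ p n = A p n + (ρ : ℂ) * B p n := by
    intro ρ p n
    simp only [hA, hB, Fmix]
    simp only [idft_eq_ch]
    have expand : ∑ ω : ZMod Q × ZMod M,
        (((1 - ρ : ℝ) : ℂ) * cdft Q M F₀ ω n + ((ρ : ℝ) : ℂ) * Ghat Q M F₀ F₁ ω n) *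
          ch Q M ω p
        = ((1 - ρ : ℝ) : ℂ) * (∑ ω : ZMod Q × ZMod M, cdft Q M F₀ ω n * ch Q M ω p)
          + ((ρ : ℝ) : ℂ) * (∑ ω : ZMod Q × ZMod M, Ghat Q M F₀ F₁ ω n * ch Q M ω p) := by
      rw [Finset.mul_sum, Finset.mul_sum, ← Finset.sum_add_distrib]
      exact Finset.sum_congr rfl fun ω _ => by ring
    rw [expand]
    push_cast
    ring
  have hGq : ∀ (i j : Fin k) (ρ : ℝ), Gmix Q M F₀ F₁ ρ i j
      = (∑ p : ZMod Q × ZMod M, A p i * A p j) / ((Q * M : ℕ) : ℂ)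
        + ((∑ p : ZMod Q × ZMod M, (A p i * B p j + B p i * A p j)) / ((Q * M : ℕ) : ℂ)) * (ρ : ℂ)
        + ((∑ p : ZMod Q × ZMod M, B p i * B p j) / ((Q * M : ℕ) : ℂ)) * (ρ : ℂ) ^ 2 := by
    intro i j ρ
    rw [Gmix]
    simp_rw [hFmix]
    have expand : ∑ p : ZMod Q × ZMod M, (A p i + (ρ:ℂ) * B p i) * (A p j + (ρ:ℂ) * B p j)
        = (∑ p : ZMod Q × ZMod M, A p i * A p j)
          + (ρ:ℂ) * (∑ p : ZMod Q × ZMod M, (A p i * B p j + B p i * A p j))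
          + (ρ:ℂ) ^ 2 * (∑ p : ZMod Q × ZMod M, B p i * B p j) := by
      rw [Finset.mul_sum, Finset.mul_sum, ← Finset.sum_add_distrib, ← Finset.sum_add_distrib]
      exact Finset.sum_congr rfl fun p _ => by ring
    rw [expand, add_div, add_div]
    ring
  have hSq : ∀ (p : ZMod Q × ZMod M) (n : Fin k) (ρ : ℝ), Smix Q M F₀ F₁ ρ p n
      = (∑ p' : ZMod Q × ZMod M, A p' n * A (p + p') n) / ((Q * M : ℕ) : ℂ)
        + ((∑ p' : ZMod Q × ZMod M, (A p' n * B (p + p') n + B p' n * A (p + p') n)) /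
            ((Q * M : ℕ) : ℂ)) * (ρ : ℂ)
        + ((∑ p' : ZMod Q × ZMod M, B p' n * B (p + p') n) / ((Q * M : ℕ) : ℂ)) * (ρ : ℂ) ^ 2 := by
    intro p n ρ
    rw [Smix]
    simp_rw [hFmix]
    have expand : ∑ p' : ZMod Q × ZMod M,
        (A p' n + (ρ:ℂ) * B p' n) * (A (p + p') n + (ρ:ℂ) * B (p + p') n)
        = (∑ p' : ZMod Q × ZMod M, A p' n * A (p + p') n)
          + (ρ:ℂ) * (∑ p' : ZMod Q × ZMod M, (A p' n * B (p + p') n + B p' n * A (p + p') n))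
          + (ρ:ℂ) ^ 2 * (∑ p' : ZMod Q × ZMod M, B p' n * B (p + p') n) := by
      rw [Finset.mul_sum, Finset.mul_sum, ← Finset.sum_add_distrib, ← Finset.sum_add_distrib]
      exact Finset.sum_congr rfl fun p' _ => by ring
    rw [expand, add_div, add_div]
    ring
  -- endpoint values of Fmix
  have hF0 : ∀ (p : ZMod Q × ZMod M) (n : Fin k),
      Fmix Q M F₀ F₁ 0 p n = ((F₀ p n : ℝ) : ℂ) := by
    intro p n
    rw [hFmix]
    simp only [Complex.ofReal_zero, zero_mul, add_zero, hA]
    exact idft_cdft Q M F₀ p n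
  have hF1 : ∀ (p : ZMod Q × ZMod M) (n : Fin k),
      Fmix Q M F₀ F₁ 1 p n = idft Q M (fun ω => Ghat Q M F₀ F₁ ω n) p := by
    intro p n
    rw [hFmix]
    simp only [Complex.ofReal_one, one_mul, hA, hB]
    ring
  -- the key phase-cancellation identity
  have hGhat : ∀ (ω : ZMod Q × ZMod M) (n m : Fin k),
      Ghat Q M F₀ F₁ (-ω) n * Ghat Q M F₀ F₁ ω m
        = cdft Q M F₁ (-ω) n * cdft Q M F₁ ω m := by
    intro ω n m
    have hcneg : cinner (cdft Q M F₁ (-ω)) (cdft Q M F₀ (-ω))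
        = (starRingEnd ℂ) (cinner (cdft Q M F₁ ω) (cdft Q M F₀ ω)) := by
      rw [cinner, cinner, map_sum]
      refine Finset.sum_congr rfl fun t _ => ?_
      rw [cdft_neg, cdft_neg, map_mul, Complex.conj_conj]
    have hcne : cinner (cdft Q M F₁ ω) (cdft Q M F₀ ω) ≠ 0 := h ω
    have habs : ((‖cinner (cdft Q M F₁ ω) (cdft Q M F₀ ω)‖ : ℝ) : ℂ) ≠ 0 :=
      Complex.ofReal_ne_zero.mpr (norm_ne_zero_iff.mpr hcne)
    have hmc : cinner (cdft Q M F₁ ω) (cdft Q M F₀ ω) *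
        (starRingEnd ℂ) (cinner (cdft Q M F₁ ω) (cdft Q M F₀ ω))
        = ((‖cinner (cdft Q M F₁ ω) (cdft Q M F₀ ω)‖ : ℝ) : ℂ) ^ 2 := by
      rw [Complex.mul_conj']
    rw [Ghat, Ghat, hcneg, Complex.norm_conj]
    field_simp
    linear_combination (cdft Q M F₁ (-ω) n * cdft Q M F₁ ω m) * hmc
  have c0 : ∀ h1 h2 : ZMod Q × ZMod M → ℂ,
      ∑ p' : ZMod Q × ZMod M, idft Q M h1 p' * idft Q M h2 p'
        = (∑ ω : ZMod Q × ZMod M, h1 (-ω) * h2 ω * ch Q M ω 0) / ((Q * M : ℕ) : ℂ) := by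
    intro h1 h2
    rw [← corr_idft Q M h1 h2 0]
    exact Finset.sum_congr rfl fun p' _ => by rw [zero_add]
  refine ⟨?_, ?_, ?_, ?_, ?_, ?_⟩
  · exact fun i j => ⟨_, _, _, hGq i j⟩
  · intro i j
    have heq : (fun ρ : ℝ => Gmix Q M F₀ F₁ ρ i j)
        = fun ρ : ℝ => (∑ p : ZMod Q × ZMod M, A p i * A p j) / ((Q * M : ℕ) : ℂ)
          + ((∑ p : ZMod Q × ZMod M, (A p i * B p j + B p i * A p j)) / ((Q * M : ℕ) : ℂ)) * (ρ:ℂ)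
          + ((∑ p : ZMod Q × ZMod M, B p i * B p j) / ((Q * M : ℕ) : ℂ)) * (ρ:ℂ) ^ 2 :=
      funext (hGq i j)
    rw [heq]
    exact Continuous.continuousOn (by fun_prop)
  · exact fun p n => ⟨_, _, _, hSq p n⟩
  · intro p n
    have heq : (fun ρ : ℝ => Smix Q M F₀ F₁ ρ p n)
        = fun ρ : ℝ => (∑ p' : ZMod Q × ZMod M, A p' n * A (p + p') n) / ((Q * M : ℕ) : ℂ)
          + ((∑ p' : ZMod Q × ZMod M, (A p' n * B (p + p') n + B p' n * A (p + p') n)) /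
              ((Q * M : ℕ) : ℂ)) * (ρ:ℂ)
          + ((∑ p' : ZMod Q × ZMod M, B p' n * B (p + p') n) / ((Q * M : ℕ) : ℂ)) * (ρ:ℂ) ^ 2 :=
      funext (hSq p n)
    rw [heq]
    exact Continuous.continuousOn (by fun_prop)
  · intro i j
    constructor
    · rw [Gmix]
      simp_rw [hF0]
      push_cast
      ring
    · rw [Gmix]
      have key : ∑ p : ZMod Q × ZMod M, Fmix Q M F₀ F₁ 1 p i * Fmix Q M F₀ F₁ 1 p j
          = ∑ p : ZMod Q × ZMod M, ((F₁ p i : ℝ) : ℂ) * ((F₁ p j : ℝ) : ℂ) := by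
        calc ∑ p : ZMod Q × ZMod M, Fmix Q M F₀ F₁ 1 p i * Fmix Q M F₀ F₁ 1 p j
            = ∑ p : ZMod Q × ZMod M, idft Q M (fun ω => Ghat Q M F₀ F₁ ω i) p *
                idft Q M (fun ω => Ghat Q M F₀ F₁ ω j) p :=
              Finset.sum_congr rfl fun p _ => by rw [hF1, hF1]
          _ = (∑ ω : ZMod Q × ZMod M, Ghat Q M F₀ F₁ (-ω) i * Ghat Q M F₀ F₁ ω j * ch Q M ω 0) /
                ((Q * M : ℕ) : ℂ) := c0 _ _
          _ = (∑ ω : ZMod Q × ZMod M, cdft Q M F₁ (-ω) i * cdft Q M F₁ ω j * ch Q M ω 0) /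
                ((Q * M : ℕ) : ℂ) := by
              congr 1
              exact Finset.sum_congr rfl fun ω _ => by rw [hGhat]
          _ = ∑ p : ZMod Q × ZMod M, idft Q M (fun ω => cdft Q M F₁ ω i) p *
                idft Q M (fun ω => cdft Q M F₁ ω j) p := (c0 _ _).symm
          _ = ∑ p : ZMod Q × ZMod M, ((F₁ p i : ℝ) : ℂ) * ((F₁ p j : ℝ) : ℂ) :=
              Finset.sum_congr rfl fun p _ => by rw [idft_cdft, idft_cdft]
      rw [key]
      push_cast
      ring
  · intro p n
    constructor
    · rw [Smix]
      simp_rw [hF0]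
      push_cast
      ring
    · rw [Smix]
      have key : ∑ p' : ZMod Q × ZMod M, Fmix Q M F₀ F₁ 1 p' n * Fmix Q M F₀ F₁ 1 (p + p') n
          = ∑ p' : ZMod Q × ZMod M, ((F₁ p' n : ℝ) : ℂ) * ((F₁ (p + p') n : ℝ) : ℂ) := by
        calc ∑ p' : ZMod Q × ZMod M, Fmix Q M F₀ F₁ 1 p' n * Fmix Q M F₀ F₁ 1 (p + p') n
            = ∑ p' : ZMod Q × ZMod M, idft Q M (fun ω => Ghat Q M F₀ F₁ ω n) p' *
                idft Q M (fun ω => Ghat Q M F₀ F₁ ω n) (p + p') :=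
              Finset.sum_congr rfl fun p' _ => by rw [hF1, hF1]
          _ = (∑ ω : ZMod Q × ZMod M, Ghat Q M F₀ F₁ (-ω) n * Ghat Q M F₀ F₁ ω n * ch Q M ω p) /
                ((Q * M : ℕ) : ℂ) := corr_idft Q M _ _ p
          _ = (∑ ω : ZMod Q × ZMod M, cdft Q M F₁ (-ω) n * cdft Q M F₁ ω n * ch Q M ω p) /
                ((Q * M : ℕ) : ℂ) := by
              congr 1
              exact Finset.sum_congr rfl fun ω _ => by rw [hGhat]
          _ = ∑ p' : ZMod Q × ZMod M, idft Q M (fun ω => cdft Q M F₁ ω n) p' *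
                idft Q M (fun ω => cdft Q M F₁ ω n) (p + p') := (corr_idft Q M _ _ p).symm
          _ = ∑ p' : ZMod Q × ZMod M, ((F₁ p' n : ℝ) : ℂ) * ((F₁ (p + p') n : ℝ) : ℂ) :=
              Finset.sum_congr rfl fun p' _ => by rw [idft_cdft, idft_cdft]
      rw [key]
      push_cast
      ring
end
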